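/- Let M be a simple matroid. Then M is modular if and only if M has an adjoint adM whose lattice of flats L(adM) is isomorphic to the opposite (order-reversed) lattice L(M)^op of the lattice of flats of M. -/

import Mathlib

open Set Matroid
open scoped Matroid

namespace AdjointPaper

variable {α β γ : Type*}

/-- The rank of a set `X` in a matroid `M`: the supremum of cardinalities of
independent subsets of `X`. -/
noncomputable def mrank (M : Matroid α) (X : Set α) : ℕ :=
  sSup (Set.ncard '' {I | M.Indep I ∧ I ⊆ X})

/-- The rank of a matroid. -/
noncomputable def mrk (M : Matroid α) : ℕ := mrank M M.E

/-- A hyperplane of `M`: a coatom of the lattice of flats. -/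
def IsHyperplane (M : Matroid α) (H : Set α) : Prop :=
  M.IsFlat H ∧ H ≠ M.E ∧ ∀ F, M.IsFlat F → H ⊂ F → F = M.E

/-- An atom of the lattice of flats of `M`. -/
def IsFlatAtom (M : Matroid α) (P : Set α) : Prop :=
  M.IsFlat P ∧ M.closure ∅ ⊂ P ∧ ∀ F, M.IsFlat F → M.closure ∅ ⊂ F → F ⊆ P → F = P

/-- `e` is a loop of `M`. -/
def IsLoop (M : Matroid α) (e : α) : Prop := e ∈ M.E ∧ ¬ M.Indep {e}

/-- `M` is loopless. -/
def Loopless (M : Matroid α) : Prop := ∀ e ∈ M.E, M.Indep {e}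

/-- `M` is simple: loopless and with no two parallel elements. -/
def Simple (M : Matroid α) : Prop :=
  (∀ e ∈ M.E, M.Indep {e}) ∧
    ∀ e ∈ M.E, ∀ f ∈ M.E, M.closure {e} = M.closure {f} → e = f

/-- `φ` is an adjoint map from `M` to `N`: an injective, order-reversing map on
flats taking hyperplanes of `M` bijectively onto the atoms of `N`, with
`N` of the same rank as `M`. -/
structure IsAdjointMap (M : Matroid α) (N : Matroid β) (φ : Set α → Set β) : Prop where
  rank_eq : mrk N = mrk M
  flat : ∀ ⦃F⦄, M.IsFlat F → N.IsFlat (φ F)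
  inj : ∀ ⦃F F'⦄, M.IsFlat F → M.IsFlat F' → φ F = φ F' → F = F'
  antitone : ∀ ⦃F F'⦄, M.IsFlat F → M.IsFlat F' → F ⊆ F' → φ F' ⊆ φ F
  hyper_atom : ∀ ⦃H⦄, IsHyperplane M H → IsFlatAtom N (φ H)
  atom_surj : ∀ ⦃P⦄, IsFlatAtom N P → ∃ H, IsHyperplane M H ∧ φ H = P

/-- `N` is an adjoint of `M`. -/
def IsAdjoint (M : Matroid α) (N : Matroid β) : Prop := ∃ φ, IsAdjointMap M N φ

/-- Isomorphism of matroids. -/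
def Iso (M : Matroid α) (N : Matroid β) : Prop :=
  ∃ f : α → β, Set.BijOn f M.E N.E ∧ ∀ I ⊆ M.E, (M.Indep I ↔ N.Indep (f '' I))

/-- Connectedness: `M` has nonempty ground set and is not a direct sum of two
matroids on nonempty ground sets. -/
def Conn (M : Matroid α) : Prop :=
  M.E.Nonempty ∧ ∀ (N₁ N₂ : Matroid α) (h : Disjoint N₁.E N₂.E),
    N₁.E.Nonempty → N₂.E.Nonempty → M ≠ Matroid.disjointSum N₁ N₂ h

/-- A circuit of `M`: a minimal dependent set. -/
def IsCircuit (M : Matroid α) (C : Set α) : Prop :=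
  C ⊆ M.E ∧ ¬ M.Indep C ∧ ∀ D, D ⊂ C → M.Indep D

/-- `K` is a connected component of `M`. -/
def ConnComponent (M : Matroid α) (K : Set α) : Prop :=
  K ⊆ M.E ∧ K.Nonempty ∧ Conn (M ↾ K) ∧
    ∀ C, IsCircuit M C → C ⊆ K ∨ Disjoint C K

/-- `M` is a modular matroid: every pair of flats is a modular pair. -/
def Modular (M : Matroid α) : Prop :=
  ∀ F F', M.IsFlat F → M.IsFlat F' →
    mrank M (M.closure (F ∪ F')) + mrank M (F ∩ F') = mrank M F + mrank M F'

/-- The lattice of flats of `N` is isomorphic to the opposite of the lattice of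
flats of `M`. -/
def FlatOpIso (M : Matroid α) (N : Matroid β) : Prop :=
  ∃ ψ : Set α → Set β, (∀ F, M.IsFlat F → N.IsFlat (ψ F)) ∧
    (∀ F F', M.IsFlat F → M.IsFlat F' → (F ⊆ F' ↔ ψ F' ⊆ ψ F)) ∧
    ∀ G, N.IsFlat G → ∃ F, M.IsFlat F ∧ ψ F = G

/-- A linear subclass of `M`: a set of hyperplanes closed under the hyperplanes
through a comodular intersection of two of its members. The lattice of all
linear subclasses ordered by inclusion is the extension lattice `E(M)`. -/
def LinearSubclass (M : Matroid α) (S : Set (Set α)) : Prop :=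
  (∀ H ∈ S, IsHyperplane M H) ∧
    ∀ H₁ ∈ S, ∀ H₂ ∈ S, mrank M (H₁ ∩ H₂) = mrk M - 2 →
      ∀ H₃, IsHyperplane M H₃ → H₁ ∩ H₂ ⊆ H₃ → H₃ ∈ S

/-- `N` is (isomorphic to) the projective geometry `PG (r-1, F)`, via a
representation `f` hitting every point of the projective space exactly once. -/
def IsProjGeomRep (N : Matroid β) (r : ℕ) (F : Type*) [Field F] : Prop :=
  ∃ f : β → (Fin r → F),
    (∀ e ∈ N.E, f e ≠ 0) ∧
    (∀ e ∈ N.E, ∀ e' ∈ N.E,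
      Submodule.span F {f e} = Submodule.span F {f e'} → e = e') ∧
    (∀ v : Fin r → F, v ≠ 0 → ∃ e ∈ N.E, Submodule.span F {f e} = Submodule.span F {v}) ∧
    ∀ I, I ⊆ N.E → (N.Indep I ↔ LinearIndependent F (fun x : I => f x.1))

/-- `N` is (isomorphic to) the finite projective geometry `PG (r-1, q)`. -/
def IsProjGeom (N : Matroid β) (r q : ℕ) : Prop :=
  ∃ (F : Type) (instF : Field F) (instT : Fintype F),
    @Fintype.card F instT = q ∧ @IsProjGeomRep _ N r F instF

/-- `M` is a projective plane: a simple rank-3 matroid in which every line has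
at least three points and every two lines meet. -/
def IsProjPlane (M : Matroid α) : Prop :=
  Simple M ∧ mrk M = 3 ∧
    (∀ L, M.IsFlat L → mrank M L = 2 → 3 ≤ L.ncard) ∧
    ∀ L L', M.IsFlat L → M.IsFlat L' → mrank M L = 2 → mrank M L' = 2 → (L ∩ L').Nonempty

/-- `N` is (isomorphic to) the uniform matroid `U_{r,m}`. -/
def IsUnif (N : Matroid β) (r m : ℕ) : Prop :=
  N.E.Finite ∧ N.E.ncard = m ∧ ∀ I, I ⊆ N.E → (N.Indep I ↔ I.Finite ∧ I.ncard ≤ r)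

section RankTheory

variable {M : Matroid α} {I J X Y F F' : Set α} {e : α}

lemma flat_closure (M : Matroid α) (X : Set α) : M.IsFlat (M.closure X) := by
  have hne : Nonempty {F // M.IsFlat F ∧ X ∩ M.E ⊆ F} :=
    ⟨⟨M.E, M.ground_isFlat, inter_subset_right⟩⟩
  have h := Matroid.IsFlat.iInter (M := M)
    (Fs := fun F : {F // M.IsFlat F ∧ X ∩ M.E ⊆ F} => F.1) (fun F => F.2.1)
  have he : M.closure X = ⋂ F : {F // M.IsFlat F ∧ X ∩ M.E ⊆ F}, F.1 := by
    rw [closure_def]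
    ext x
    simp only [mem_sInter, mem_setOf_eq, mem_iInter, Subtype.forall]
  rw [he]
  exact h

lemma flat_sInter {S : Set (Set α)} (hne : S.Nonempty) (h : ∀ F ∈ S, M.IsFlat F) :
    M.IsFlat (⋂₀ S) := by
  have : Nonempty S := hne.to_subtype
  have hh := Matroid.IsFlat.iInter (M := M) (Fs := fun F : S => F.1) (fun F => h F.1 F.2)
  rwa [sInter_eq_iInter]

lemma flat_inter (hF : M.IsFlat F) (hF' : M.IsFlat F') : M.IsFlat (F ∩ F') := by
  rw [← sInter_pair]
  exact flat_sInter ⟨F, by simp⟩ (by rintro G (rfl | rfl) <;> assumption)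

variable [RankFinite M]

lemma le_mrank (hI : M.Indep I) (hIX : I ⊆ X) : I.ncard ≤ mrank M X := by
  obtain ⟨J, hJ, hIJ⟩ := hI.subset_isBasis'_of_subset hIX
  calc I.ncard ≤ J.ncard := Set.ncard_le_ncard hIJ hJ.indep.finite
    _ ≤ mrank M X := le_csSup ⟨J.ncard, fun n hn => ?_⟩ ⟨J, ⟨hJ.indep, hJ.subset⟩, rfl⟩
  obtain ⟨K, ⟨hK, hKX⟩, rfl⟩ := hn
  obtain ⟨K', hK', hKK'⟩ := hK.subset_isBasis'_of_subset hKX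
  have : K'.ncard = J.ncard := by rw [Set.ncard, Set.ncard, hK'.encard_eq_encard hJ]
  exact this ▸ Set.ncard_le_ncard hKK' hK'.indep.finite

lemma mrank_eq_ncard_of_basis' (hI : M.IsBasis' I X) : mrank M X = I.ncard := by
  have hgr : IsGreatest (Set.ncard '' {J | M.Indep J ∧ J ⊆ X}) I.ncard := by
    constructor
    · exact ⟨I, ⟨hI.indep, hI.subset⟩, rfl⟩
    · rintro n ⟨J, ⟨hJind, hJX⟩, rfl⟩
      obtain ⟨J', hJ', hJJ'⟩ := hJind.subset_isBasis'_of_subset hJX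
      have hcard : J'.encard = I.encard := hJ'.encard_eq_encard hI
      have : J'.ncard = I.ncard := by rw [Set.ncard, Set.ncard, hcard]
      exact this ▸ Set.ncard_le_ncard hJJ' hJ'.indep.finite
  exact hgr.csSup_eq


lemma mrank_eq_ncard_of_basis (hI : M.IsBasis I X) : mrank M X = I.ncard :=
  mrank_eq_ncard_of_basis' hI.isBasis'

lemma mrank_indep (hI : M.Indep I) : mrank M I = I.ncard :=
  mrank_eq_ncard_of_basis hI.isBasis_self

lemma mrank_mono (h : X ⊆ Y) : mrank M X ≤ mrank M Y := by
  obtain ⟨I, hI⟩ := M.exists_isBasis' X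
  rw [mrank_eq_ncard_of_basis' hI]
  exact le_mrank hI.indep (hI.subset.trans h)

lemma mrank_closure (X : Set α) : mrank M (M.closure X) = mrank M X := by
  obtain ⟨I, hI⟩ := M.exists_isBasis' X
  rw [mrank_eq_ncard_of_basis' hI,
    mrank_eq_ncard_of_basis hI.isBasis_closure_right]

lemma mrank_insert_le (X : Set α) (e : α) : mrank M (insert e X) ≤ mrank M X + 1 := by
  obtain ⟨I, hI⟩ := M.exists_isBasis' X
  obtain ⟨J, hJ, hIJ⟩ := hI.indep.subset_isBasis'_of_subset
    (hI.subset.trans (subset_insert e X))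
  have hJsub : J ⊆ insert e I := by
    intro f hf
    rcases eq_or_ne f e with rfl | hfe
    · exact mem_insert _ _
    have hfX : f ∈ X := by
      rcases hJ.subset hf with h | h
      · exact absurd h hfe
      · exact h
    by_contra hfI
    have hfI' : f ∉ I := fun h => hfI (mem_insert_of_mem _ h)
    have hfcl : f ∈ M.closure I := by
      rw [hI.closure_eq_closure]
      exact M.inter_ground_subset_closure X ⟨hfX, hJ.indep.subset_ground hf⟩
    have : f ∈ M.closure (J \ {f}) :=
      M.closure_subset_closure (subset_diff_singleton hIJ hfI') hfcl
    exact hJ.indep.notMem_closure_diff_of_mem hf this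
  rw [mrank_eq_ncard_of_basis' hJ, mrank_eq_ncard_of_basis' hI]
  exact le_trans (Set.ncard_le_ncard hJsub (hI.indep.finite.insert e))
    (Set.ncard_insert_le e I)

lemma flat_mrank_lt (hF : M.IsFlat F) (hF' : M.IsFlat F') (hss : F ⊂ F') :
    mrank M F < mrank M F' := by
  obtain ⟨I, hI⟩ := M.exists_isBasis F hF.subset_ground
  obtain ⟨e, heF', heF⟩ := exists_of_ssubset hss
  have heE : e ∈ M.E := hF'.subset_ground heF'
  have hecl : e ∉ M.closure I := by
    rw [hI.closure_eq_closure, hF.closure]; exact heF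
  have heI : e ∉ I := fun h => heF (hI.subset h)
  have hins : M.Indep (insert e I) := by
    rw [hI.indep.insert_indep_iff_of_notMem heI]
    exact ⟨heE, hecl⟩
  have hle : (insert e I).ncard ≤ mrank M F' :=
    le_mrank hins (insert_subset heF' (hI.subset.trans hss.subset))
  rw [mrank_eq_ncard_of_basis hI]
  rw [Set.ncard_insert_of_notMem heI hI.indep.finite] at hle
  omega

lemma flat_eq_of_subset_mrank_le (hF : M.IsFlat F) (hF' : M.IsFlat F') (hss : F ⊆ F')
    (hr : mrank M F' ≤ mrank M F) : F = F' := by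
  by_contra hne
  exact absurd hr (not_le.mpr (flat_mrank_lt hF hF' (hss.ssubset_of_ne hne)))

lemma mem_closure_iff_mrank (hX : X ⊆ M.E) (he : e ∈ M.E) :
    e ∈ M.closure X ↔ mrank M (insert e X) = mrank M X := by
  constructor
  · intro h
    rw [← mrank_closure (insert e X), ← mrank_closure X,
      closure_insert_eq_of_mem_closure h]
  · intro h
    by_contra hecl
    obtain ⟨I, hI⟩ := M.exists_isBasis X hX
    have heI : e ∉ I := fun hh => hecl (M.subset_closure X hX (hI.subset hh))
    have hecl' : e ∉ M.closure I := by rwa [hI.closure_eq_closure]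
    have hins : M.Indep (insert e I) := by
      rw [hI.indep.insert_indep_iff_of_notMem heI]
      exact ⟨he, hecl'⟩
    have hle : (insert e I).ncard ≤ mrank M (insert e X) :=
      le_mrank hins (insert_subset_insert hI.subset)
    rw [Set.ncard_insert_of_notMem heI hI.indep.finite, h,
      mrank_eq_ncard_of_basis hI] at hle
    omega

lemma mrank_submod (hX : X ⊆ M.E) (hY : Y ⊆ M.E) :
    mrank M (X ∪ Y) + mrank M (X ∩ Y) ≤ mrank M X + mrank M Y := by
  obtain ⟨I, hI⟩ := M.exists_isBasis (X ∩ Y) ((inter_subset_left).trans hX)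
  obtain ⟨J, hJ, hIJ⟩ := hI.indep.subset_isBasis_of_subset
    (hI.subset.trans ((inter_subset_left).trans subset_union_left))
    (union_subset hX hY)
  have hJfin : J.Finite := hJ.indep.finite
  have h1 : (J ∩ X).ncard ≤ mrank M X := le_mrank (hJ.indep.subset inter_subset_left)
    inter_subset_right
  have h2 : (J ∩ Y).ncard ≤ mrank M Y := le_mrank (hJ.indep.subset inter_subset_left)
    inter_subset_right
  have hcup : (J ∩ X) ∪ (J ∩ Y) = J := by
    rw [← inter_union_distrib_left]
    exact inter_eq_self_of_subset_left hJ.subset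
  have hcap : (J ∩ X) ∩ (J ∩ Y) = J ∩ (X ∩ Y) := by
    ext x; simp; tauto
  have hkey := Set.ncard_union_add_ncard_inter (J ∩ X) (J ∩ Y)
    (hJfin.subset inter_subset_left) (hJfin.subset inter_subset_left)
  rw [hcup, hcap] at hkey
  have hIsub : I ⊆ J ∩ (X ∩ Y) := subset_inter hIJ hI.subset
  have hIcard : I.ncard ≤ (J ∩ (X ∩ Y)).ncard :=
    Set.ncard_le_ncard hIsub (hJfin.subset inter_subset_left)
  rw [mrank_eq_ncard_of_basis hJ, mrank_eq_ncard_of_basis hI]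
  omega

lemma flat_mrank_zero (hF : M.IsFlat F) (h : mrank M F = 0) : F = M.closure ∅ := by
  obtain ⟨I, hI⟩ := M.exists_isBasis F hF.subset_ground
  rw [mrank_eq_ncard_of_basis hI] at h
  have hIe : I = ∅ := (Set.ncard_eq_zero hI.indep.finite).mp h
  rw [← hF.closure, ← hI.closure_eq_closure, hIe]

lemma flat_cover_mrank (hF : M.IsFlat F) (hF' : M.IsFlat F') (hss : F ⊂ F')
    (hno : ∀ G, M.IsFlat G → F ⊆ G → G ⊆ F' → G = F ∨ G = F') :
    mrank M F' = mrank M F + 1 := by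
  obtain ⟨e, heF', heF⟩ := exists_of_ssubset hss
  have heE : e ∈ M.E := hF'.subset_ground heF'
  have hins : insert e F ⊆ M.E := insert_subset heE hF.subset_ground
  have hG : M.IsFlat (M.closure (insert e F)) := flat_closure M _
  have hFG : F ⊆ M.closure (insert e F) :=
    (subset_insert e F).trans (M.subset_closure _ hins)
  have hGF' : M.closure (insert e F) ⊆ F' := by
    rw [← hF'.closure]
    exact M.closure_subset_closure (insert_subset heF' hss.subset)
  have hGne : M.closure (insert e F) ≠ F := by
    intro h
    exact heF (h ▸ M.subset_closure _ hins (mem_insert e F))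
  rcases hno _ hG hFG hGF' with h | h
  · exact absurd h hGne
  · have h1 : mrank M F' ≤ mrank M F + 1 := by
      rw [← h, mrank_closure]
      exact mrank_insert_le F e
    have h2 : mrank M F < mrank M F' := flat_mrank_lt hF hF' hss
    omega

lemma exists_flat_covered {k : ℕ} (hF : M.IsFlat F) (hk : mrank M F = k + 1) :
    ∃ F₀, M.IsFlat F₀ ∧ F₀ ⊂ F ∧ mrank M F₀ = k ∧
      ∀ G, M.IsFlat G → F₀ ⊆ G → G ⊆ F → G = F₀ ∨ G = F := by
  obtain ⟨I, hI⟩ := M.exists_isBasis F hF.subset_ground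
  rw [mrank_eq_ncard_of_basis hI] at hk
  have hIne : I.Nonempty := by
    rw [← Set.ncard_pos hI.indep.finite] at *; omega
  obtain ⟨e, heI⟩ := hIne
  set F₀ := M.closure (I \ {e}) with hF₀def
  have hF₀ : M.IsFlat F₀ := flat_closure M _
  have hr₀ : mrank M F₀ = k := by
    rw [hF₀def, mrank_closure, mrank_indep (hI.indep.subset diff_subset),
      Set.ncard_diff_singleton_of_mem heI]
    omega
  have hF₀F : F₀ ⊆ F := by
    rw [hF₀def, ← hF.closure, ← hI.closure_eq_closure]
    exact M.closure_subset_closure diff_subset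
  have hrF : mrank M F = k + 1 := by rw [mrank_eq_ncard_of_basis hI, hk]
  have hss : F₀ ⊂ F := hF₀F.ssubset_of_ne (fun h => by rw [h, hrF] at hr₀; omega)
  refine ⟨F₀, hF₀, hss, hr₀, fun G hG h₀G hGF => ?_⟩
  have hrG1 : k ≤ mrank M G := hr₀ ▸ mrank_mono h₀G
  have hrG2 : mrank M G ≤ k + 1 := hrF ▸ mrank_mono hGF
  rcases eq_or_lt_of_le hrG1 with h | h
  · exact Or.inl (flat_eq_of_subset_mrank_le hF₀ hG h₀G (by omega)).symm
  · exact Or.inr (flat_eq_of_subset_mrank_le hG hF hGF (by omega))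

end RankTheory


section Backward

variable {M : Matroid α} {N : Matroid β}

lemma finiteRk_of_flats_finite (h : {G | N.IsFlat G}.Finite) : N.RankFinite := by
  obtain ⟨B, hB⟩ := N.exists_isBase
  have hkey : ∀ J J' : Set β, J ⊆ B → J' ⊆ B → N.closure J = N.closure J' → J' ⊆ J := by
    intro J J' hJB hJ'B hcl
    have hind : N.Indep (J ∪ J') := hB.indep.subset (union_subset hJB hJ'B)
    have hsub : J ∪ J' ⊆ N.closure J := by
      refine union_subset (N.subset_closure J (hJB.trans hB.indep.subset_ground)) ?_
      rw [hcl]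
      exact N.subset_closure J' (hJ'B.trans hB.indep.subset_ground)
    by_contra hne
    have hss : J ⊂ J ∪ J' := subset_union_left.ssubset_of_ne
      (fun hh => hne (subset_union_right.trans hh.symm.subset))
    have h1 : N.closure J ⊂ N.closure (J ∪ J') := hind.closure_ssubset_closure hss
    have h2 : N.closure (J ∪ J') ⊆ N.closure J :=
      closure_subset_closure_of_subset_closure hsub
    exact absurd (h1.trans_subset h2) (lt_irrefl _)
  have hinj : Set.InjOn N.closure {S | S ⊆ B} := fun J hJ J' hJ' hcl =>
    (hkey J' J hJ' hJ hcl.symm).antisymm (hkey J J' hJ hJ' hcl)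
  have himg : (N.closure '' {S | S ⊆ B}).Finite :=
    h.subset (by rintro _ ⟨S, _, rfl⟩; exact flat_closure N S)
  have hfin : {S | S ⊆ B}.Finite := Set.Finite.of_finite_image himg hinj
  have hBfin : B.Finite := by
    have h2 : ((fun e => ({e} : Set β)) '' B).Finite :=
      hfin.subset (by rintro _ ⟨e, he, rfl⟩; exact singleton_subset_iff.mpr he)
    exact Set.Finite.of_finite_image h2
      (fun a _ b _ hab => Set.singleton_eq_singleton_iff.mp hab)
  exact hB.rankFinite_of_finite hBfin

lemma height_lemma [M.RankFinite] [N.RankFinite] {ψ : Set α → Set β}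
    (hflat : ∀ F, M.IsFlat F → N.IsFlat (ψ F))
    (hiff : ∀ F F', M.IsFlat F → M.IsFlat F' → (F ⊆ F' ↔ ψ F' ⊆ ψ F))
    (hsurj : ∀ G, N.IsFlat G → ∃ F, M.IsFlat F ∧ ψ F = G) (n : ℕ) :
    ∀ F, M.IsFlat F → mrank M F = n →
      mrank M F + mrank N (ψ F) = mrank N (ψ (M.closure ∅)) := by
  induction n with
  | zero =>
    intro F hF h0
    have hFe := flat_mrank_zero hF h0
    subst hFe
    rw [h0]
    omega
  | succ n ih =>
    intro F hF hk
    obtain ⟨F₀, hF₀, hss, hr₀, hno⟩ := exists_flat_covered hF hk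
    have ihF₀ := ih F₀ hF₀ hr₀
    have hsub : ψ F ⊆ ψ F₀ := (hiff F₀ F hF₀ hF).mp hss.subset
    have hne : ψ F ≠ ψ F₀ := by
      intro heq
      exact absurd ((hiff F F₀ hF hF₀).mpr (heq ▸ subset_rfl)) (fun h => hss.not_subset h)
    have hcov : ∀ G', N.IsFlat G' → ψ F ⊆ G' → G' ⊆ ψ F₀ → G' = ψ F ∨ G' = ψ F₀ := by
      intro G' hG' h1 h2
      obtain ⟨F₁, hF₁, rfl⟩ := hsurj G' hG'
      have hup : F₁ ⊆ F := (hiff F₁ F hF₁ hF).mpr h1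
      have hlo : F₀ ⊆ F₁ := (hiff F₀ F₁ hF₀ hF₁).mpr h2
      rcases hno F₁ hF₁ hlo hup with h | h
      · exact Or.inr (by rw [h])
      · exact Or.inl (by rw [h])
    have hcovr : mrank N (ψ F₀) = mrank N (ψ F) + 1 :=
      flat_cover_mrank (hflat F hF) (hflat F₀ hF₀) (hsub.ssubset_of_ne hne) hcov
    omega

lemma modular_of_flatOpIso [M.Finite] (h : FlatOpIso M N) : Modular M := by
  obtain ⟨ψ, hflat, hiff, hsurj⟩ := h
  haveI hNfr : N.RankFinite := by
    refine finiteRk_of_flats_finite ?_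
    have hMflats : {F | M.IsFlat F}.Finite :=
      M.ground_finite.finite_subsets.subset (fun F hF => hF.subset_ground)
    refine (hMflats.image ψ).subset ?_
    intro G hG
    obtain ⟨F, hF, rfl⟩ := hsurj G hG
    exact ⟨F, hF, rfl⟩
  intro F F' hF hF'
  have hFE := hF.subset_ground
  have hF'E := hF'.subset_ground
  set J := M.closure (F ∪ F') with hJdef
  have hJ : M.IsFlat J := flat_closure M _
  have hMt : M.IsFlat (F ∩ F') := flat_inter hF hF'
  have hle : mrank M J + mrank M (F ∩ F') ≤ mrank M F + mrank M F' := by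
    rw [hJdef, mrank_closure]
    exact mrank_submod hFE hF'E
  have hh := height_lemma hflat hiff hsurj
  have h1 := hh _ F hF rfl
  have h2 := hh _ F' hF' rfl
  have h3 := hh _ J hJ rfl
  have h4 := hh _ (F ∩ F') hMt rfl
  have hFJ : F ⊆ J := subset_union_left.trans (M.subset_closure _ (union_subset hFE hF'E))
  have hF'J : F' ⊆ J := subset_union_right.trans (M.subset_closure _ (union_subset hFE hF'E))
  have hA : mrank N (ψ J) ≤ mrank N (ψ F ∩ ψ F') :=
    mrank_mono (subset_inter ((hiff F J hF hJ).mp hFJ) ((hiff F' J hF' hJ).mp hF'J))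
  have hG₀ : N.IsFlat (N.closure (ψ F ∪ ψ F')) := flat_closure N _
  obtain ⟨G, hG, hGeq⟩ := hsurj _ hG₀
  have hψE : ψ F ∪ ψ F' ⊆ N.E :=
    union_subset (hflat F hF).subset_ground (hflat F' hF').subset_ground
  have hGF : G ⊆ F := (hiff G F hG hF).mpr
    (hGeq ▸ (subset_union_left.trans (N.subset_closure _ hψE)))
  have hGF' : G ⊆ F' := (hiff G F' hG hF').mpr
    (hGeq ▸ (subset_union_right.trans (N.subset_closure _ hψE)))
  have hB : mrank N (ψ (F ∩ F')) ≤ mrank N (ψ F ∪ ψ F') := by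
    have : ψ (F ∩ F') ⊆ N.closure (ψ F ∪ ψ F') :=
      hGeq ▸ (hiff G (F ∩ F') hG hMt).mp (subset_inter hGF hGF')
    calc mrank N (ψ (F ∩ F')) ≤ mrank N (N.closure (ψ F ∪ ψ F')) := mrank_mono this
      _ = mrank N (ψ F ∪ ψ F') := mrank_closure _
  have hsubN : mrank N (ψ F ∪ ψ F') + mrank N (ψ F ∩ ψ F') ≤
      mrank N (ψ F) + mrank N (ψ F') :=
    mrank_submod (hflat F hF).subset_ground (hflat F' hF').subset_ground
  omega

end Backward

section Forward

def HypSet (M : Matroid α) : Set (Set α) := {H | IsHyperplane M H}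

def mset (M : Matroid α) (G : Set (Set α)) : Set α := ⋂₀ (insert M.E G)

noncomputable def corho (M : Matroid α) (G : Set (Set α)) : ℕ :=
  mrk M - mrank M (mset M G)

def adjPsi (M : Matroid α) : Set α → Set (Set α) :=
  fun F => {H | IsHyperplane M H ∧ F ⊆ H}

variable {M : Matroid α} {H F : Set α} {G G' I J : Set (Set α)} {e : α}

lemma mrk_def (M : Matroid α) : mrk M = mrank M M.E := rfl

lemma hypSet_finite [M.Finite] : (HypSet M).Finite :=
  M.ground_finite.finite_subsets.subset (fun _ hH => hH.1.subset_ground)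

lemma mset_subset_ground : mset M G ⊆ M.E :=
  sInter_subset_of_mem (mem_insert _ _)

lemma mset_antitone (h : G ⊆ G') : mset M G' ⊆ mset M G :=
  sInter_subset_sInter (insert_subset_insert h)

lemma mset_empty (M : Matroid α) : mset M ∅ = M.E := by simp [mset]

lemma mset_insert (M : Matroid α) (H : Set α) (G : Set (Set α)) :
    mset M (insert H G) = H ∩ mset M G := by
  unfold mset
  rw [sInter_insert, sInter_insert, sInter_insert]
  ext x; simp; tauto

lemma subset_mset_iff {X : Set α} : X ⊆ mset M G ↔ X ⊆ M.E ∧ ∀ H ∈ G, X ⊆ H := by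
  unfold mset
  simp [subset_sInter_iff]

lemma mset_subset_mem (hH : H ∈ G) : mset M G ⊆ H :=
  sInter_subset_of_mem (mem_insert_of_mem _ hH)

lemma mset_flat (hG : G ⊆ HypSet M) : M.IsFlat (mset M G) := by
  refine flat_sInter ⟨M.E, mem_insert _ _⟩ ?_
  rintro F (rfl | hF)
  · exact M.ground_isFlat
  · exact (hG hF).1

variable [M.Finite]

lemma hyperplane_mrank (hH : IsHyperplane M H) : mrank M H + 1 = mrk M := by
  obtain ⟨hflat, hne, hmax⟩ := hH
  have hss : H ⊂ M.E := hflat.subset_ground.ssubset_of_ne hne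
  obtain ⟨e, heE, heH⟩ := exists_of_ssubset hss
  have hins : insert e H ⊆ M.E := insert_subset heE hflat.subset_ground
  have hHss : H ⊂ M.closure (insert e H) := by
    refine (((subset_insert e H).trans (M.subset_closure _ hins))).ssubset_of_ne ?_
    intro h
    exact heH (h ▸ M.subset_closure _ hins (mem_insert e H))
  have hE : M.closure (insert e H) = M.E := hmax _ (flat_closure M _) hHss
  have h1 : mrk M ≤ mrank M H + 1 := by
    rw [mrk_def, ← hE, mrank_closure]
    exact mrank_insert_le H e
  have h2 : mrank M H < mrk M := by
    rw [mrk_def]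
    exact flat_mrank_lt hflat M.ground_isFlat hss
  omega

lemma exists_hyperplane_avoiding (hF : M.IsFlat F) (he : e ∈ M.E) (heF : e ∉ F) :
    ∃ H, IsHyperplane M H ∧ F ⊆ H ∧ e ∉ H := by
  set S := {G | M.IsFlat G ∧ F ⊆ G ∧ e ∉ G} with hSdef
  have hSfin : S.Finite :=
    M.ground_finite.finite_subsets.subset (fun G hG => hG.1.subset_ground)
  obtain ⟨H, hHmx⟩ := hSfin.exists_maximal ⟨F, hF, subset_rfl, heF⟩
  have hHS := hHmx.prop
  have hHmax : ∀ G' ∈ S, H ⊆ G' → H = G' := fun G' h1 h2 => hHmx.eq_of_le h1 h2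
  obtain ⟨hHflat, hFH, heH⟩ := hHS
  have hkey : ∀ G', M.IsFlat G' → H ⊂ G' → e ∈ G' := by
    intro G' hG' hss'
    by_contra heG'
    have hmem : G' ∈ S := ⟨hG', hFH.trans hss'.subset, heG'⟩
    exact hss'.ne (hHmax G' hmem hss'.subset)
  refine ⟨H, ⟨hHflat, fun h => heH (h ▸ he), ?_⟩, hFH, heH⟩
  intro G hG hss
  have hsub : M.E ⊆ M.closure (insert e H) := by
    intro f hfE
    by_cases hfH : f ∈ H
    · exact M.subset_closure _ (insert_subset he hHflat.subset_ground)
        (mem_insert_of_mem _ hfH)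
    · have hinsf : insert f H ⊆ M.E := insert_subset hfE hHflat.subset_ground
      have hHssf : H ⊂ M.closure (insert f H) := by
        refine ((subset_insert f H).trans (M.subset_closure _ hinsf)).ssubset_of_ne ?_
        intro h
        exact hfH (h ▸ M.subset_closure _ hinsf (mem_insert f H))
      have hecl : e ∈ M.closure (insert f H) :=
        hkey _ (flat_closure M _) hHssf
      have heH' : e ∉ M.closure H := by rwa [hHflat.closure]
      exact (Matroid.closure_exchange ⟨hecl, heH'⟩).1
  have heG : e ∈ G := hkey G hG hss
  refine hG.subset_ground.antisymm (hsub.trans ?_)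
  rw [← hG.closure]
  exact M.closure_subset_closure (insert_subset heG hss.subset)

lemma corho_add (G : Set (Set α)) : mrank M (mset M G) + corho M G = mrk M := by
  have h0 : mset M G ⊆ M.E := mset_subset_ground
  have h : mrank M (mset M G) ≤ mrank M M.E := mrank_mono h0
  rw [← mrk_def] at h
  unfold corho
  omega

lemma corho_empty (M : Matroid α) [M.Finite] : corho M ∅ = 0 := by
  unfold corho
  rw [mset_empty, ← mrk_def]
  omega

lemma corho_mono (h : G ⊆ G') : corho M G ≤ corho M G' := by
  have h1 := corho_add (M := M) G
  have h2 := corho_add (M := M) G'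
  have h3 := mrank_mono (M := M) (mset_antitone (M := M) h)
  omega

lemma corho_insert_le (hMod : Modular M) (hG : G ⊆ HypSet M) (hH : IsHyperplane M H) :
    corho M (insert H G) ≤ corho M G + 1 := by
  have hMod' := hMod (mset M G) H (mset_flat hG) hH.1
  have h1 : mrank M (M.closure (mset M G ∪ H)) ≤ mrk M := by
    rw [mrank_closure, mrk_def]
    exact mrank_mono (union_subset mset_subset_ground hH.1.subset_ground)
  have h2 := hyperplane_mrank hH
  have ha := corho_add (M := M) G
  have hb := corho_add (M := M) (insert H G)
  rw [mset_insert, inter_comm] at hb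
  omega

lemma corho_submod (hMod : Modular M) (hG : G ⊆ HypSet M) (hG' : G' ⊆ HypSet M) :
    corho M (G ∪ G') + corho M (G ∩ G') ≤ corho M G + corho M G' := by
  have hAf : M.IsFlat (mset M G) := mset_flat hG
  have hBf : M.IsFlat (mset M G') := mset_flat hG'
  have hmodAB := hMod (mset M G) (mset M G') hAf hBf
  have hunion : mset M (G ∪ G') = mset M G ∩ mset M G' := by
    unfold mset
    ext x
    simp only [mem_sInter, mem_insert_iff, mem_inter_iff, forall_eq_or_imp, mem_union]
    constructor
    · rintro ⟨hE, h⟩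
      exact ⟨⟨hE, fun t ht => h t (Or.inl ht)⟩, ⟨hE, fun t ht => h t (Or.inr ht)⟩⟩
    · rintro ⟨⟨hE, h1⟩, ⟨-, h2⟩⟩
      exact ⟨hE, fun t ht => ht.elim (h1 t) (h2 t)⟩
  have hinter : M.closure (mset M G ∪ mset M G') ⊆ mset M (G ∩ G') := by
    rw [subset_mset_iff]
    refine ⟨M.closure_subset_ground _, fun H hH => ?_⟩
    have h1 : mset M G ∪ mset M G' ⊆ H :=
      union_subset (mset_subset_mem hH.1) (mset_subset_mem hH.2)
    rw [← (hG hH.1).1.closure]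
    exact M.closure_subset_closure h1
  have h2 : mrank M (M.closure (mset M G ∪ mset M G')) ≤ mrank M (mset M (G ∩ G')) :=
    mrank_mono hinter
  have ha := corho_add (M := M) G
  have hb := corho_add (M := M) G'
  have hc := corho_add (M := M) (G ∪ G')
  have hd := corho_add (M := M) (G ∩ G')
  rw [hunion] at hc
  omega

lemma corho_union_le (hMod : Modular M) {A K : Set (Set α)} (hA : A ⊆ HypSet M)
    (hK : K.Finite) (hKhyp : K ⊆ HypSet M) :
    corho M (A ∪ K) ≤ corho M A + K.ncard := by
  have main : ∀ K : Set (Set α), K.Finite → K ⊆ HypSet M →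
      corho M (A ∪ K) ≤ corho M A + K.ncard := by
    intro K hK
    refine Set.Finite.induction_on
      (motive := fun K _ => K ⊆ HypSet M → corho M (A ∪ K) ≤ corho M A + K.ncard)
      K hK (fun _ => by simp) ?_
    intro a s ha hs ih hsub
    · 
      have has : s ⊆ HypSet M := (subset_insert a s).trans hsub
      have h1 : corho M (A ∪ insert a s) ≤ corho M (A ∪ s) + 1 := by
        rw [union_insert]
        exact corho_insert_le hMod (union_subset hA has) (hsub (mem_insert a s))
      have h2 := ih has
      rw [Set.ncard_insert_of_notMem ha hs]
      omega
  exact main K hK hKhyp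

lemma corho_le_ncard (hMod : Modular M) (hGfin : G.Finite) (hG : G ⊆ HypSet M) :
    corho M G ≤ G.ncard := by
  have := corho_union_le hMod (empty_subset _) hGfin hG
  rw [empty_union] at this
  rw [corho_empty] at this
  omega

lemma corho_union_eq (hMod : Modular M) {A K : Set (Set α)} (hA : A ⊆ HypSet M)
    (hK : K.Finite) (hKhyp : K ⊆ HypSet M)
    (h : ∀ H ∈ K, corho M (insert H A) ≤ corho M A) :
    corho M (A ∪ K) = corho M A := by
  have main : ∀ K : Set (Set α), K.Finite → K ⊆ HypSet M →
      (∀ H ∈ K, corho M (insert H A) ≤ corho M A) → corho M (A ∪ K) = corho M A := by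
    intro K hK
    refine Set.Finite.induction_on
      (motive := fun K _ => K ⊆ HypSet M → (∀ H ∈ K, corho M (insert H A) ≤ corho M A) →
        corho M (A ∪ K) = corho M A)
      K hK (fun _ _ => by simp) ?_
    intro a s ha hs ih hsub hle
    · 
      have has : s ⊆ HypSet M := (subset_insert a s).trans hsub
      have hih : corho M (A ∪ s) = corho M A :=
        ih has (fun H hH => hle H (mem_insert_of_mem _ hH))
      have hsm := corho_submod hMod (union_subset hA has)
        (insert_subset (hsub (mem_insert a s)) hA : insert a A ⊆ HypSet M)
      have hu : (A ∪ s) ∪ insert a A = A ∪ insert a s := by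
        ext x; simp; tauto
      have hi : A ⊆ (A ∪ s) ∩ insert a A :=
        subset_inter subset_union_left (subset_insert a A)
      have h1 : corho M A ≤ corho M ((A ∪ s) ∩ insert a A) := corho_mono hi
      have h2 : corho M A ≤ corho M (A ∪ insert a s) :=
        corho_mono (subset_union_left)
      rw [hu, hih] at hsm
      have h3 := hle a (mem_insert a s)
      omega
  exact main K hK hKhyp h

noncomputable def adjMatroid (M : Matroid α) [M.Finite] (hMod : Modular M) :
    Matroid (Set α) :=
  (IndepMatroid.ofFinite (hE := hypSet_finite (M := M))
    (Indep := fun G => G ⊆ HypSet M ∧ corho M G = G.ncard)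
    (indep_empty := ⟨empty_subset _, by rw [corho_empty]; simp⟩)
    (indep_subset := by
      rintro I J ⟨hJhyp, hJcard⟩ hIJ
      have hJfin : J.Finite := hypSet_finite.subset hJhyp
      have hIfin : I.Finite := hJfin.subset hIJ
      have hIhyp : I ⊆ HypSet M := hIJ.trans hJhyp
      refine ⟨hIhyp, ?_⟩
      have h1 : corho M I ≤ I.ncard := corho_le_ncard hMod hIfin hIhyp
      have h2 : corho M J ≤ corho M I + (J \ I).ncard := by
        have := corho_union_le hMod hIhyp (hJfin.diff (t := I))
          (diff_subset.trans hJhyp)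
        rwa [union_diff_cancel hIJ] at this
      have h3 : (J \ I).ncard = J.ncard - I.ncard := Set.ncard_diff hIJ hIfin
      have h4 : I.ncard ≤ J.ncard := Set.ncard_le_ncard hIJ hJfin
      omega)
    (indep_aug := by
      rintro I J ⟨hIhyp, hIcard⟩ ⟨hJhyp, hJcard⟩ hlt
      by_contra hcon
      push_neg at hcon
      have hIfin : I.Finite := hypSet_finite.subset hIhyp
      have hJfin : J.Finite := hypSet_finite.subset hJhyp
      have hstep : ∀ H ∈ J \ I, corho M (insert H I) ≤ corho M I := by
        rintro H ⟨hHJ, hHI⟩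
        have h1 : corho M (insert H I) ≤ corho M I + 1 :=
          corho_insert_le hMod hIhyp (hJhyp hHJ)
        by_contra hgt
        push_neg at hgt
        refine hcon H hHJ hHI (insert_subset (hJhyp hHJ) hIhyp) ?_
        rw [Set.ncard_insert_of_notMem hHI hIfin]
        omega
      have hunion : corho M (I ∪ (J \ I)) = corho M I :=
        corho_union_eq hMod hIhyp (hJfin.diff (t := I)) (diff_subset.trans hJhyp) hstep
      rw [union_diff_self] at hunion
      have hJle : corho M J ≤ corho M (I ∪ J) := corho_mono subset_union_right
      omega)
    (subset_ground := fun I hI => hI.1)).matroid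

variable {hMod : Modular M}

lemma adjMatroid_E (hMod : Modular M) : (adjMatroid M hMod).E = HypSet M := rfl

instance adjMatroid_finite (hMod : Modular M) : (adjMatroid M hMod).Finite :=
  ⟨hypSet_finite⟩

lemma adjMatroid_indep_iff {G : Set (Set α)} (hMod : Modular M) :
    (adjMatroid M hMod).Indep G ↔ G ⊆ HypSet M ∧ corho M G = G.ncard := by
  simp [adjMatroid]

lemma adjMatroid_mrank (hMod : Modular M) (hG : G ⊆ HypSet M) :
    mrank (adjMatroid M hMod) G = corho M G := by
  obtain ⟨I, hI⟩ := (adjMatroid M hMod).exists_isBasis G hG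
  obtain ⟨hIsub, hIcard⟩ := (adjMatroid_indep_iff hMod).mp hI.indep
  have hIfin : I.Finite := hypSet_finite.subset hIsub
  have hstep : ∀ H ∈ G \ I, corho M (insert H I) ≤ corho M I := by
    intro H hH
    have hdep := hI.insert_dep hH
    have hne := hdep.not_indep
    rw [adjMatroid_indep_iff hMod] at hne
    have h1 : corho M (insert H I) ≤ corho M I + 1 :=
      corho_insert_le hMod hIsub (hG hH.1)
    by_contra hgt
    push_neg at hgt
    refine hne ⟨insert_subset (hG hH.1) hIsub, ?_⟩
    rw [Set.ncard_insert_of_notMem hH.2 hIfin]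
    omega
  have hfin : (G \ I).Finite := (hypSet_finite.subset hG).diff (t := I)
  have hunion := corho_union_eq hMod hIsub hfin (diff_subset.trans hG) hstep
  rw [union_diff_cancel hI.subset] at hunion
  rw [mrank_eq_ncard_of_basis hI, ← hIcard, ← hunion]

lemma mset_hypSet (M : Matroid α) [M.Finite] : mrank M (mset M (HypSet M)) = 0 := by
  have hsub : mset M (HypSet M) ⊆ M.closure ∅ := by
    intro e he
    have heE : e ∈ M.E := mset_subset_ground he
    by_contra hecl
    obtain ⟨H, hH, _, heH⟩ := exists_hyperplane_avoiding (flat_closure M ∅) heE hecl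
    exact heH (mset_subset_mem hH he)
  have h1 : mrank M (mset M (HypSet M)) ≤ mrank M (M.closure ∅) := mrank_mono hsub
  have h2 : mrank M (M.closure ∅) = 0 := by
    rw [mrank_closure, mrank_indep M.empty_indep, Set.ncard_empty]
  omega

lemma adjMatroid_mrk (hMod : Modular M) : mrk (adjMatroid M hMod) = mrk M := by
  rw [mrk_def, adjMatroid_E hMod, adjMatroid_mrank hMod subset_rfl]
  have := corho_add (M := M) (HypSet M)
  rw [mset_hypSet] at this
  omega

lemma adjPsi_subset_hypSet (F : Set α) : adjPsi M F ⊆ HypSet M := fun _ hH => hH.1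

lemma mset_adjPsi (hF : M.IsFlat F) : mset M (adjPsi M F) = F := by
  apply subset_antisymm
  · intro e he
    have heE : e ∈ M.E := mset_subset_ground he
    by_contra heF
    obtain ⟨H, hH, hFH, heH⟩ := exists_hyperplane_avoiding hF heE heF
    exact heH (mset_subset_mem (⟨hH, hFH⟩ : H ∈ adjPsi M F) he)
  · rw [subset_mset_iff]
    exact ⟨hF.subset_ground, fun H hH => hH.2⟩

lemma adjPsi_flat (hMod : Modular M) (hF : M.IsFlat F) :
    (adjMatroid M hMod).IsFlat (adjPsi M F) := by
  set N := adjMatroid M hMod with hN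
  have hsub : adjPsi M F ⊆ N.E := adjPsi_subset_hypSet F
  have hcl : N.closure (adjPsi M F) = adjPsi M F := by
    refine subset_antisymm ?_ (N.subset_closure _ hsub)
    intro H' hH'
    have hH'E : H' ∈ N.E := N.closure_subset_ground _ hH'
    have hH'hyp : IsHyperplane M H' := hH'E
    rw [mem_closure_iff_mrank hsub hH'E] at hH'
    rw [adjMatroid_mrank hMod (insert_subset hH'E hsub),
      adjMatroid_mrank hMod hsub] at hH'
    have ha := corho_add (M := M) (adjPsi M F)
    have hb := corho_add (M := M) (insert H' (adjPsi M F))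
    have hmr : mrank M (mset M (insert H' (adjPsi M F))) = mrank M (mset M (adjPsi M F)) := by
      omega
    rw [mset_insert, mset_adjPsi hF] at hmr
    have hflat1 : M.IsFlat (H' ∩ F) := flat_inter hH'hyp.1 hF
    have heq : H' ∩ F = F := by
      refine flat_eq_of_subset_mrank_le hflat1 hF inter_subset_right ?_
      rw [hmr]
    exact ⟨hH'hyp, heq ▸ inter_subset_left⟩
  rw [← hcl]
  exact flat_closure N _

lemma adjMatroid_closure_empty (hMod : Modular M) :
    (adjMatroid M hMod).closure ∅ = ∅ := by
  set N := adjMatroid M hMod with hN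
  refine eq_empty_of_subset_empty ?_
  intro H' hH'
  have hH'E : H' ∈ N.E := N.closure_subset_ground _ hH'
  have hH'hyp : IsHyperplane M H' := hH'E
  rw [mem_closure_iff_mrank (empty_subset _) hH'E] at hH'
  rw [insert_empty_eq] at hH'
  have h1 : mrank N {H'} = corho M {H'} :=
    adjMatroid_mrank hMod (singleton_subset_iff.mpr hH'E)
  have h2 : mrank N (∅ : Set (Set α)) = corho M ∅ :=
    adjMatroid_mrank hMod (empty_subset _)
  have h3 : corho M ({H'} : Set (Set α)) = 1 := by
    have hm : mset M {H'} = H' := by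
      rw [show ({H'} : Set (Set α)) = insert H' ∅ by simp, mset_insert, mset_empty,
        inter_eq_self_of_subset_left hH'hyp.1.subset_ground]
    have := corho_add (M := M) {H'}
    rw [hm] at this
    have := hyperplane_mrank hH'hyp
    omega
  rw [h1, h2, corho_empty] at hH'
  omega

lemma adjPsi_hyperplane (hH : IsHyperplane M H) : adjPsi M H = {H} := by
  ext H'
  constructor
  · rintro ⟨hH', hHH'⟩
    by_contra hne
    have hss : H ⊂ H' := hHH'.ssubset_of_ne (fun h => hne (by rw [← h]; rfl))
    exact hH'.2.1 (hH.2.2 H' hH'.1 hss)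
  · rintro rfl
    exact ⟨hH, subset_rfl⟩


lemma adjPsi_hyper_atom (hMod : Modular M) (hH : IsHyperplane M H) :
    IsFlatAtom (adjMatroid M hMod) (adjPsi M H) := by
  rw [adjPsi_hyperplane hH]
  have hflat : (adjMatroid M hMod).IsFlat {H} := by
    rw [← adjPsi_hyperplane hH]
    exact adjPsi_flat hMod hH.1
  have hcl : (adjMatroid M hMod).closure ∅ = ∅ := adjMatroid_closure_empty hMod
  refine ⟨hflat, ?_, ?_⟩
  · rw [hcl]
    exact (empty_subset _).ssubset_of_ne (Ne.symm (singleton_ne_empty H))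
  · intro P hP hss hsub
    rw [hcl] at hss
    rcases subset_singleton_iff_eq.mp hsub with h | h
    · exact absurd h.symm hss.ne
    · exact h

lemma adjPsi_atom_surj (hMod : Modular M) {P : Set (Set α)}
    (hP : IsFlatAtom (adjMatroid M hMod) P) :
    ∃ H, IsHyperplane M H ∧ adjPsi M H = P := by
  obtain ⟨hPflat, hPss, hPmin⟩ := hP
  obtain ⟨H, hHP, hHcl⟩ := exists_of_ssubset hPss
  have hHhyp : IsHyperplane M H := hPflat.subset_ground hHP
  have hflat : (adjMatroid M hMod).IsFlat {H} := by
    rw [← adjPsi_hyperplane hHhyp]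
    exact adjPsi_flat hMod hHhyp.1
  have hss : (adjMatroid M hMod).closure ∅ ⊂ {H} := by
    rw [adjMatroid_closure_empty hMod]
    exact (empty_subset _).ssubset_of_ne (Ne.symm (singleton_ne_empty H))
  have := hPmin {H} hflat hss (singleton_subset_iff.mpr hHP)
  exact ⟨H, hHhyp, by rw [adjPsi_hyperplane hHhyp, this]⟩

lemma adjPsi_surj (hMod : Modular M) {P : Set (Set α)}
    (hP : (adjMatroid M hMod).IsFlat P) :
    ∃ F, M.IsFlat F ∧ adjPsi M F = P := by
  set N := adjMatroid M hMod with hN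
  have hPE : P ⊆ HypSet M := hP.subset_ground
  refine ⟨mset M P, mset_flat hPE, ?_⟩
  apply subset_antisymm
  · rintro H ⟨hHhyp, hHsub⟩
    have hHE : H ∈ N.E := hHhyp
    rw [← hP.closure]
    rw [mem_closure_iff_mrank hPE hHE, adjMatroid_mrank hMod (insert_subset hHE hPE),
      adjMatroid_mrank hMod hPE]
    unfold corho
    rw [mset_insert, inter_eq_self_of_subset_right hHsub]
  · intro H hHP
    exact ⟨hPE hHP, mset_subset_mem hHP⟩

lemma exists_adjoint (hMod : Modular M) :
    ∃ N : Matroid (Set α), IsAdjoint M N ∧ FlatOpIso M N := by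
  refine ⟨adjMatroid M hMod, ⟨adjPsi M, ?_⟩, adjPsi M, ?_, ?_, ?_⟩
  · refine ⟨adjMatroid_mrk hMod, fun F hF => adjPsi_flat hMod hF, ?_, ?_, ?_, ?_⟩
    · intro F F' hF hF' heq
      rw [← mset_adjPsi hF, ← mset_adjPsi hF', heq]
    · intro F F' _ _ hss H hH
      exact ⟨hH.1, hss.trans hH.2⟩
    · exact fun H hH => adjPsi_hyper_atom hMod hH
    · exact fun P hP => adjPsi_atom_surj hMod hP
  · exact fun F hF => adjPsi_flat hMod hF
  · intro F F' hF hF'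
    constructor
    · intro hss H hH
      exact ⟨hH.1, hss.trans hH.2⟩
    · intro hss
      rw [← mset_adjPsi hF, ← mset_adjPsi hF']
      exact mset_antitone hss
  · exact fun G hG => adjPsi_surj hMod hG

end Forward


/-- a simple matroid is modular iff it has an adjoint whose flat
lattice is isomorphic to the opposite of its own flat lattice. -/
theorem statement_7 {M : Matroid α} [M.Finite] (hM : Simple M) :
    Modular M ↔ ∃ N : Matroid (Set α), IsAdjoint M N ∧ FlatOpIso M N := by
  exact ⟨fun h => exists_adjoint h, fun ⟨_, _, hiso⟩ => modular_of_flatOpIso hiso⟩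

end AdjointPaper
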